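/- Let R be an associative unital ring, q a central invertible element, and a, b, c invertible elements of R with a + c invertible, satisfying ab = q²ba, ca = q²ac, and bc = cb. Define a' := bc(a+c)⁻¹, b' := a+c, c' := ba(a+c)⁻¹. Then in the ring of 3×3 matrices over R the quantum Gauss decomposition identity holds: (1 + a·E₂₃)·(1 + b·E₁₂)·(1 + c·E₂₃) = (1 + a'·E₁₂)·(1 + b'·E₂₃)·(1 + c'·E₁₂), where E_{k,l} denotes the 3×3 matrix over R with entry 1 at position (k,l) and 0 elsewhere. -/

import Mathlib

open Matrix

/-- The quantum Gauss decomposition identity (Section 5 of the paper):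
`x₂(a)x₁(b)x₂(c) = x₁(a')x₂(b')x₁(c')` in 3×3 matrices over a ring with
q-commuting entries, where `x_i(u) = 1 + u·E_{i,i+1}`,
`a' = bc(a+c)⁻¹`, `b' = a+c`, `c' = ba(a+c)⁻¹`. -/
theorem quantum_gauss_decomposition (R : Type*) [Ring R] (q a b c : R)
    (hqc : ∀ x : R, q * x = x * q) (hq : IsUnit q)
    (ha : IsUnit a) (hb : IsUnit b) (hc : IsUnit c) (hac : IsUnit (a + c))
    (hab : a * b = q ^ 2 * (b * a)) (hca : c * a = q ^ 2 * (a * c))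
    (hbc : b * c = c * b) :
    ((1 : Matrix (Fin 3) (Fin 3) R) + Matrix.single 1 2 a) *
        (1 + Matrix.single 0 1 b) * (1 + Matrix.single 1 2 c) =
      (1 + Matrix.single 0 1 (b * c * Ring.inverse (a + c))) *
        (1 + Matrix.single 1 2 (a + c)) *
          (1 + Matrix.single 0 1 (b * a * Ring.inverse (a + c))) := by
  have h1 : b * c * Ring.inverse (a + c) + b * a * Ring.inverse (a + c) = b := by
    rw [← add_mul, ← mul_add, add_comm c a, mul_assoc,
      Ring.mul_inverse_cancel _ hac, mul_one]
  have h2 : b * c * Ring.inverse (a + c) * (a + c) = b * c := by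
    rw [mul_assoc, Ring.inverse_mul_cancel _ hac, mul_one]
  have h1' : b * a * Ring.inverse (a + c) + b * c * Ring.inverse (a + c) = b := by
    rw [add_comm]; exact h1
  have h3 : c + a = a + c := add_comm c a
  ext i j
  fin_cases i <;> fin_cases j <;>
    simp [Matrix.mul_apply, Fin.sum_univ_three, Matrix.single,
      Matrix.one_apply, h1, h1', h2, h3]
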